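/- arXiv:2309.16930 — 2 statements merged into one kernel-verified Lean document; each statement's English description precedes it below -/
import Mathlib

section
/- Let L be a nonempty finite index set, and let (w̄_l)_{l∈L} and (w_l)_{l∈L} be families of vectors in ℝ⁶. If for every l ∈ L the deviation w_l − w̄_l lies in −conv({w̄_l : l ∈ L}) (the negation of the convex hull of the mean wrenches), then 0 ∈ conv({w_l : l ∈ L}) (the origin lies in the convex hull of the perturbed wrenches). -/
/-- **Proposition 2 (PONG).** If every wrench deviation `w l - w̄ l` lies in the negated
convex hull of the mean wrenches, then the origin lies in the convex hull of the
perturbed wrenches. -/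
theorem force_closure_of_deviations_in_neg_hull
    {L : Type*} [Fintype L] [Nonempty L]
    (wbar w : L → (Fin 6 → ℝ))
    (h : ∀ l : L, w l - wbar l ∈ -(convexHull ℝ (Set.range wbar))) :
    (0 : Fin 6 → ℝ) ∈ convexHull ℝ (Set.range w) := by
  by_contra h0
  -- The convex hull of a finite set is compact, hence closed.
  have hfin : (Set.range w).Finite := Set.finite_range w
  have hclosed : IsClosed (convexHull ℝ (Set.range w)) :=
    (hfin.isCompact_convexHull (𝕜 := ℝ)).isClosed
  obtain ⟨f, u, hfu, hu0⟩ :=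
    geometric_hahn_banach_closed_point (convex_convexHull ℝ (Set.range w)) hclosed h0
  rw [map_zero] at hu0
  -- pick l₁ maximizing f ∘ wbar
  obtain ⟨l₁, -, hl₁⟩ :=
    Finset.exists_max_image Finset.univ (fun l => f (wbar l)) Finset.univ_nonempty
  set M := f (wbar l₁) with hM
  -- convex hull of range wbar lies in the halfspace {x | f x ≤ M}
  have hhalf : convexHull ℝ (Set.range wbar) ⊆ {x | f x ≤ M} := by
    apply convexHull_min
    · rintro x ⟨l, rfl⟩
      exact hl₁ l (Finset.mem_univ l)
    · exact convex_halfSpace_le (f := fun x => f x)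
        ⟨fun a b => by simp, fun c a => by simp⟩ M
  have hv : wbar l₁ - w l₁ ∈ convexHull ℝ (Set.range wbar) := by
    have := h l₁
    rwa [Set.mem_neg, neg_sub] at this
  have h1 : f (wbar l₁ - w l₁) ≤ M := hhalf hv
  have h2 : f (w l₁) < u := hfu _ (subset_convexHull ℝ _ ⟨l₁, rfl⟩)
  have h3 : f (wbar l₁) - f (w l₁) ≤ M := by rwa [map_sub] at h1
  linarith
end

section
/- Let n_f and n_s be positive natural numbers. For each i ∈ {1,…,n_f} and j ∈ {1,…,n_s}, let T_j^i : ℝ³ → ℝ⁶ be a linear map, let n̄^i ∈ ℝ³ be a mean normal, and let W̄ = {T_j^i n̄^i : i ∈ {1,…,n_f}, j ∈ {1,…,n_s}} be the finite set of mean basis wrenches. If vectors n^i ∈ ℝ³ (i = 1,…,n_f) satisfy T_j^i (n^i − n̄^i) ∈ −conv(W̄) for every i and j, then 0 ∈ conv({T_j^i n^i : i ∈ {1,…,n_f}, j ∈ {1,…,n_s}}). -/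
/-- **Decomposition step (PONG).** If each random normal `n i` satisfies
`T i j (n i - n̄ i) ∈ -conv(W̄)` for every pyramid edge `j`, where `W̄` is the set of
mean basis wrenches `T i j (n̄ i)`, then the induced random basis wrenches certify
force closure: `0 ∈ conv({T i j (n i)})`. -/
theorem force_closure_of_normals_in_approx_sets
    {nf ns : ℕ} (hnf : 0 < nf) (hns : 0 < ns)
    (T : Fin nf → Fin ns → ((Fin 3 → ℝ) →ₗ[ℝ] (Fin 6 → ℝ)))
    (nbar n : Fin nf → (Fin 3 → ℝ))
    (h : ∀ i : Fin nf, ∀ j : Fin ns,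
      T i j (n i - nbar i) ∈
        -(convexHull ℝ (Set.range (fun p : Fin nf × Fin ns => T p.1 p.2 (nbar p.1))))) :
    (0 : Fin 6 → ℝ) ∈
      convexHull ℝ (Set.range (fun p : Fin nf × Fin ns => T p.1 p.2 (n p.1))) := by
  classical
  set w : Fin nf × Fin ns → (Fin 6 → ℝ) := fun p => T p.1 p.2 (nbar p.1) with hw
  set v : Fin nf × Fin ns → (Fin 6 → ℝ) := fun p => T p.1 p.2 (n p.1) with hv
  -- extract c p ∈ conv(range w) with v p = w p - c p
  have hc : ∀ p : Fin nf × Fin ns,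
      ∃ c ∈ convexHull ℝ (Set.range w), v p = w p - c := by
    intro p
    have hp := h p.1 p.2
    rw [Set.mem_neg] at hp
    refine ⟨-(T p.1 p.2 (n p.1 - nbar p.1)), hp, ?_⟩
    simp [hv, hw, map_sub]
  choose c hcmem hceq using hc
  by_contra h0
  -- separate 0 from conv(range v)
  have hfin : (Set.range v).Finite := Set.finite_range v
  have hclosed : IsClosed (convexHull ℝ (Set.range v)) :=
    (hfin.isCompact_convexHull (𝕜 := ℝ)).isClosed
  obtain ⟨f, u, hfu, hu0⟩ :=
    geometric_hahn_banach_closed_point (convex_convexHull ℝ _) hclosed h0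
  have hu : u < 0 := by simpa using hu0
  have hfv : ∀ p, f (v p) < u := fun p =>
    hfu _ (subset_convexHull ℝ _ ⟨p, rfl⟩)
  -- pick p minimizing f ∘ w
  obtain ⟨p0, -, hp0⟩ := Finset.exists_max_image Finset.univ (fun p => f (w p))
    ⟨(⟨0, hnf⟩, ⟨0, hns⟩), Finset.mem_univ _⟩
  -- f (c p0) ≥ f (w p0) since c p0 ∈ conv(range w)
  have hsub : convexHull ℝ (Set.range w) ⊆ {x | f x ≤ f (w p0)} := by
    apply convexHull_min
    · rintro x ⟨q, rfl⟩
      exact hp0 q (Finset.mem_univ q)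
    · exact convex_halfSpace_le (f : (Fin 6 → ℝ) →ₗ[ℝ] ℝ).isLinear _
  have h1 : f (c p0) ≤ f (w p0) := hsub (hcmem p0)
  have h2 : f (v p0) = f (w p0) - f (c p0) := by rw [hceq p0, map_sub]
  have := hfv p0
  rw [h2] at this
  linarith
end
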